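/- Let γ be Euclidean gamma matrices with charge-conjugation matrix C, and let ξ : Fin 4 → R be a Grassmann-even Majorana spinor over a ℂ-algebra R. Then ξ̄ξ = 0, ξ̄γ5ξ = 0, and ξ̄(γ5γ_μ)ξ = 0 for every μ. -/

import Mathlib

open Matrix Complex BigOperators

noncomputable section

abbrev M4 : Type := Matrix (Fin 4) (Fin 4) ℂ

/-- Euclidean Clifford relation: γ_μγ_ν + γ_νγ_μ = 2δ_{μν}·1. -/
def CliffordRel (γ : Fin 4 → M4) : Prop :=
  ∀ μ ν, γ μ * γ ν + γ ν * γ μ = if μ = ν then (2 : ℂ) • (1 : M4) else 0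

/-- γ5 := -(γ_0 γ_1 γ_2 γ_3). -/
def gamma5 (γ : Fin 4 → M4) : M4 := -(γ 0 * γ 1 * γ 2 * γ 3)

/-- σ_{μν} := (γ_μγ_ν - γ_νγ_μ)/2 = [γ_μ, γ_ν]/2. -/
def sigmaMat (γ : Fin 4 → M4) (μ ν : Fin 4) : M4 :=
  (2⁻¹ : ℂ) • (γ μ * γ ν - γ ν * γ μ)

/-- Charge-conjugation matrix: invertible, Cᵀ = -C, C⁻¹γ_μC = -(γ_μ)ᵀ. -/
def ChargeConj (γ : Fin 4 → M4) (C : M4) : Prop :=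
  IsUnit C.det ∧ Cᵀ = -C ∧ ∀ μ, C⁻¹ * γ μ * C = -(γ μ)ᵀ

/-- Majorana conjugate row vector: ξ̄_β := -Σ_α ξ_α·(C⁻¹)_{αβ}. -/
def MajBar {R : Type*} [Ring R] [Algebra ℂ R] (C : M4) (ξ : Fin 4 → R) (β : Fin 4) : R :=
  -∑ α, (C⁻¹ α β) • ξ α

/-- Spinor bilinear: ξ̄Mχ := Σ_{β,γ'} ξ̄_β·M_{βγ'}·χ_{γ'} (complex entries act by scalar
multiplication). -/
def bilin {R : Type*} [Ring R] [Algebra ℂ R] (C : M4) (M : M4) (ξ χ : Fin 4 → R) : R :=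
  ∑ β, ∑ g, M β g • (MajBar C ξ β * χ g)


lemma bilin_expand {R : Type*} [Ring R] [Algebra ℂ R] (C M : M4) (ξ χ : Fin 4 → R) :
    bilin C M ξ χ = -∑ α, ∑ g, ((C⁻¹ * M) α g) • (ξ α * χ g) := by
  unfold bilin MajBar
  simp only [Matrix.mul_apply, Finset.sum_smul, neg_mul, Finset.sum_mul, smul_mul_assoc,
    smul_neg, smul_smul, neg_neg, Finset.smul_sum]
  simp only [Finset.sum_neg_distrib]
  congr 1
  calc ∑ β : Fin 4, ∑ g : Fin 4, ∑ α : Fin 4, (M β g * C⁻¹ α β) • (ξ α * χ g)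
      = ∑ β : Fin 4, ∑ α : Fin 4, ∑ g : Fin 4, (M β g * C⁻¹ α β) • (ξ α * χ g) :=
        Finset.sum_congr rfl (fun β _ => Finset.sum_comm)
    _ = ∑ α : Fin 4, ∑ β : Fin 4, ∑ g : Fin 4, (M β g * C⁻¹ α β) • (ξ α * χ g) :=
        Finset.sum_comm
    _ = ∑ α : Fin 4, ∑ g : Fin 4, ∑ β : Fin 4, (M β g * C⁻¹ α β) • (ξ α * χ g) :=
        Finset.sum_congr rfl (fun α _ => Finset.sum_comm)
    _ = ∑ α : Fin 4, ∑ g : Fin 4, ∑ β : Fin 4, (C⁻¹ α β * M β g) • (ξ α * χ g) := by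
        refine Finset.sum_congr rfl fun α _ => Finset.sum_congr rfl fun g _ =>
          Finset.sum_congr rfl fun β _ => ?_
        rw [mul_comm]

lemma bilin_zero {R : Type*} [Ring R] [Algebra ℂ R] (C M : M4) (ξ : Fin 4 → R)
    (heven : ∀ α β, ξ α * ξ β = ξ β * ξ α)
    (hA : (C⁻¹ * M)ᵀ = -(C⁻¹ * M)) : bilin C M ξ ξ = 0 := by
  set A := C⁻¹ * M with hAdef
  have h1 : bilin C M ξ ξ = -∑ α, ∑ g, A α g • (ξ α * ξ g) := bilin_expand C M ξ ξ
  have h2 : ∑ α, ∑ g, A α g • (ξ α * ξ g) = ∑ α, ∑ g, A g α • (ξ α * ξ g) := by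
    calc ∑ α, ∑ g, A α g • (ξ α * ξ g) = ∑ g, ∑ α, A α g • (ξ α * ξ g) := Finset.sum_comm
      _ = ∑ α, ∑ g, A g α • (ξ g * ξ α) := rfl
      _ = ∑ α, ∑ g, A g α • (ξ α * ξ g) := by
          exact Finset.sum_congr rfl fun α _ => Finset.sum_congr rfl fun g _ => by
            rw [heven]
  have hskew : ∀ α g, A g α = -A α g := by
    intro α g
    have := congrFun (congrFun hA α) g
    simpa [Matrix.transpose_apply, Matrix.neg_apply] using this
  have hsum : bilin C M ξ ξ + bilin C M ξ ξ = 0 := by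
    rw [h1]
    nth_rewrite 2 [h2]
    rw [← neg_add, ← Finset.sum_add_distrib]
    simp only [← Finset.sum_add_distrib, ← add_smul]
    have hz : ∀ α g : Fin 4, (A α g + A g α) • (ξ α * ξ g) = (0:R) := by
      intro α g; rw [hskew α g, add_neg_cancel, zero_smul]
    simp [hz]
  have h2smul : (2 : ℂ) • bilin C M ξ ξ = 0 := by rw [two_smul]; exact hsum
  calc bilin C M ξ ξ = ((2:ℂ)⁻¹ * 2) • bilin C M ξ ξ := by norm_num
    _ = (2:ℂ)⁻¹ • ((2:ℂ) • bilin C M ξ ξ) := mul_smul _ _ _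
    _ = 0 := by rw [h2smul, smul_zero]

lemma sw {A : Type*} [Ring A] {x y : A} (h : y * x = -(x * y)) (z : A) :
    y * (x * z) = -(x * (y * z)) := by
  rw [← mul_assoc, h, neg_mul, mul_assoc]

lemma rev4z {A : Type*} [Ring A] {a b c d z : A}
    (hba : b * a = -(a * b)) (hca : c * a = -(a * c)) (hda : d * a = -(a * d))
    (hcb : c * b = -(b * c)) (hdb : d * b = -(b * d)) (hdc : d * c = -(c * d)) :
    d * (c * (b * (a * z))) = a * (b * (c * (d * z))) := by
  simp only [sw hba, sw hca, sw hda, sw hcb, sw hdb, sw hdc,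
    hba, hca, hda, hcb, hdb, hdc, mul_neg, neg_mul, neg_neg]

lemma move4 {A : Type*} [Ring A] {a b c d x : A}
    (hba : b * a = -(a * b)) (hca : c * a = -(a * c)) (hda : d * a = -(a * d))
    (hcb : c * b = -(b * c)) (hdb : d * b = -(b * d)) (hdc : d * c = -(c * d))
    (hx : x = a ∨ x = b ∨ x = c ∨ x = d) :
    a * (b * (c * (d * x))) = -(x * (a * (b * (c * d)))) := by
  rcases hx with rfl | rfl | rfl | rfl <;>
  simp only [sw hba, sw hca, sw hda, sw hcb, sw hdb, sw hdc,
    hba, hca, hda, hcb, hdb, hdc, mul_neg, neg_mul, neg_neg]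


theorem statement2 {R : Type*} [Ring R] [Algebra ℂ R]
    (γ : Fin 4 → M4) (C : M4) (hcl : CliffordRel γ) (hC : ChargeConj γ C)
    (ξ : Fin 4 → R) (heven : ∀ α β, ξ α * ξ β = ξ β * ξ α) :
    bilin C 1 ξ ξ = 0 ∧ bilin C (gamma5 γ) ξ ξ = 0 ∧
    ∀ μ, bilin C (gamma5 γ * γ μ) ξ ξ = 0 := by
  obtain ⟨hdet, hCT, hconj⟩ := hC
  have anti : ∀ μ ν, μ ≠ ν → γ ν * γ μ = -(γ μ * γ ν) := by
    intro μ ν h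
    have h2 := hcl μ ν
    rw [if_neg h] at h2
    exact eq_neg_of_add_eq_zero_right h2
  have antiT : ∀ μ ν, μ ≠ ν → (γ ν)ᵀ * (γ μ)ᵀ = -((γ μ)ᵀ * (γ ν)ᵀ) := by
    intro μ ν h
    have := congrArg Matrix.transpose (anti ν μ h.symm)
    simpa [Matrix.transpose_mul] using this
  have hCC : C * C⁻¹ = 1 := Matrix.mul_nonsing_inv C hdet
  have hCCi : C⁻¹ * C = 1 := Matrix.nonsing_inv_mul C hdet
  have hmul : ∀ μ, C⁻¹ * γ μ = -((γ μ)ᵀ * C⁻¹) := by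
    intro μ
    have h : C⁻¹ * γ μ * C * C⁻¹ = -(γ μ)ᵀ * C⁻¹ := by rw [hconj μ]
    rwa [mul_assoc, hCC, mul_one, neg_mul] at h
  have hmul' : ∀ μ, (γ μ)ᵀ * C⁻¹ = -(C⁻¹ * γ μ) := by
    intro μ; rw [hmul μ, neg_neg]
  have pull : ∀ (μ : Fin 4) (X : M4), C⁻¹ * (γ μ * X) = -((γ μ)ᵀ * (C⁻¹ * X)) := by
    intro μ X; rw [← mul_assoc, hmul μ, neg_mul, mul_assoc]
  have hCinvT : C⁻¹ᵀ = -C⁻¹ := by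
    rw [Matrix.transpose_nonsing_inv, hCT]
    refine Matrix.inv_eq_left_inv ?_
    rw [neg_mul, mul_neg, neg_neg, hCCi]
  have skew : ∀ M : M4, Mᵀ * C⁻¹ = C⁻¹ * M → (C⁻¹ * M)ᵀ = -(C⁻¹ * M) := by
    intro M h
    rw [Matrix.transpose_mul, hCinvT, Matrix.mul_neg, h]
  -- the γ5 identity
  have h5 : (gamma5 γ)ᵀ * C⁻¹ = C⁻¹ * gamma5 γ := by
    unfold gamma5
    simp only [Matrix.transpose_neg, Matrix.transpose_mul, neg_mul, mul_neg, neg_inj, mul_assoc]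
    rw [pull 0, pull 1, pull 2, hmul 3]
    simp only [mul_neg, neg_neg]
    exact rev4z (antiT 0 1 (by decide)) (antiT 0 2 (by decide)) (antiT 0 3 (by decide))
      (antiT 1 2 (by decide)) (antiT 1 3 (by decide)) (antiT 2 3 (by decide))
  -- γ5 anticommutes with each γ μ
  have hg5 : ∀ μ, γ μ * gamma5 γ = -(gamma5 γ * γ μ) := by
    intro μ
    unfold gamma5
    simp only [mul_neg, neg_mul, neg_neg, neg_inj, mul_assoc]
    have hx : γ μ = γ 0 ∨ γ μ = γ 1 ∨ γ μ = γ 2 ∨ γ μ = γ 3 := by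
      fin_cases μ <;> simp
    exact (move4 (anti 0 1 (by decide)) (anti 0 2 (by decide)) (anti 0 3 (by decide))
      (anti 1 2 (by decide)) (anti 1 3 (by decide)) (anti 2 3 (by decide)) hx).symm
  have h5g : ∀ μ, (gamma5 γ * γ μ)ᵀ * C⁻¹ = C⁻¹ * (gamma5 γ * γ μ) := by
    intro μ
    rw [Matrix.transpose_mul, mul_assoc, h5, ← mul_assoc, hmul' μ, neg_mul, mul_assoc,
      ← Matrix.mul_neg, hg5 μ, neg_neg]
  refine ⟨?_, ?_, fun μ => ?_⟩
  · exact bilin_zero C 1 ξ heven (skew 1 (by rw [Matrix.transpose_one, one_mul, mul_one]))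
  · exact bilin_zero C _ ξ heven (skew _ h5)
  · exact bilin_zero C _ ξ heven (skew _ (h5g μ))
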